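/- Let d ≥ 1 and let k ≥ 2 be an integer. There exists a constant c > 0 depending only on k such that the following holds. Let g₀ ∈ L¹(ℝ^d) and let g₁ : ℝ^d → ℂ be measurable with ⟨·⟩^{−1}g₁ ∈ L¹(ℝ^d), let M ≥ ‖g₀‖_{L¹} + 2‖⟨·⟩^{−1}g₁‖_{L¹}, with M > 0, and let 0 < T ≤ min(c·M^{−(k−1)/2}, 1). Let v : [0, T] → L¹(ℝ^d) be a continuous map with sup_{t} ‖v(t)‖_{L¹} ≤ 2M satisfying the integral equation v(t)(ξ) = cos(t‖ξ‖)·g₀(ξ) + K(t, ξ)·g₁(ξ) + ∫₀^t K(t − t', ξ)·(v(t')^{*k})(ξ) dt' for all t ∈ [0, T] and a.e. ξ. Define the Picard iterates P₀(t)(ξ) := cos(t‖ξ‖)·g₀(ξ) + K(t, ξ)·g₁(ξ) and P_{m+1}(t)(ξ) := P₀(t)(ξ) + ∫₀^t K(t − t', ξ)·(P_m(t')^{*k})(ξ) dt'. Then sup_{t ∈ [0,T]} ‖P_m(t) − v(t)‖_{L¹} → 0 as m → ∞. -/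

import Mathlib

open MeasureTheory Real Set Classical
open scoped ENNReal

noncomputable section

/-- Euclidean space `ℝ^d`. -/
abbrev Euc (d : ℕ) := EuclideanSpace ℝ (Fin d)

/-- The Japanese bracket `⟨ξ⟩ = (1 + ‖ξ‖²)^{1/2}`. -/
def jb {d : ℕ} (ξ : Euc d) : ℝ := (1 + ‖ξ‖ ^ 2) ^ ((1 : ℝ) / 2)

/-- The wave kernel `K(t,ξ) = sin(t‖ξ‖)/‖ξ‖`, with the convention `K(t,0) = t`. -/
def Kker {d : ℕ} (t : ℝ) (ξ : Euc d) : ℝ :=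
  if ξ = 0 then t else Real.sin (t * ‖ξ‖) / ‖ξ‖

/-- `convPow f n` is the `(n+1)`-fold convolution power of `f`;
in particular `convPow f (k-1) = f^{*k}`. -/
def convPow {d : ℕ} (f : Euc d → ℂ) : ℕ → Euc d → ℂ
  | 0 => f
  | n + 1 => fun ξ => ∫ η, convPow f n η * f (ξ - η)

/-- The weighted norm `‖⟨·⟩^s f‖_{L²(ℝ^d)}` (valued in `ℝ≥0∞`). -/
def wnorm (d : ℕ) (s : ℝ) (f : Euc d → ℂ) : ℝ≥0∞ :=
  eLpNorm (fun ξ => ((jb ξ ^ s : ℝ) : ℂ) * f ξ) 2 volume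

open Filter Topology
open scoped NNReal

variable {d : ℕ}

/-- total L¹ mass (lintegral of nnnorm). -/
def NN (f : Euc d → ℂ) : ℝ≥0∞ := ∫⁻ ξ, ‖f ξ‖₊

lemma NN_eq_eLpNorm (f : Euc d → ℂ) : NN f = eLpNorm f 1 volume :=
  by rw [eLpNorm_one_eq_lintegral_enorm]; rfl

lemma conv_kernel_meas {f g : Euc d → ℂ} (hf : Measurable f) (hg : Measurable g) :
    Measurable (fun p : Euc d × Euc d => f p.2 * g (p.1 - p.2)) :=
  (hf.comp measurable_snd).mul (hg.comp (measurable_fst.sub measurable_snd))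

lemma double_lint {f g : Euc d → ℂ} (hf : Measurable f) (hg : Measurable g) :
    ∫⁻ ξ, ∫⁻ η, ‖f η * g (ξ - η)‖₊ ∂volume ∂volume = NN f * NN g := by
  rw [lintegral_lintegral_swap ((conv_kernel_meas hf hg).nnnorm.coe_nnreal_ennreal.aemeasurable)]
  have : ∀ η, ∫⁻ ξ, (‖f η * g (ξ - η)‖₊ : ℝ≥0∞) ∂volume
      = ‖f η‖₊ * NN g := by
    intro η
    simp_rw [nnnorm_mul, ENNReal.coe_mul]
    have hm : Measurable fun ξ : Euc d => (‖g (ξ - η)‖₊ : ℝ≥0∞) :=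
      (hg.comp (measurable_id.sub measurable_const)).nnnorm.coe_nnreal_ennreal
    rw [lintegral_const_mul _ hm]
    congr 1
    exact lintegral_sub_right_eq_self (fun ξ => (‖g ξ‖₊ : ℝ≥0∞)) η
  simp_rw [this]
  rw [lintegral_mul_const _ hf.nnnorm.coe_nnreal_ennreal]
  rfl

lemma NN_conv_le {f g : Euc d → ℂ} (hf : Measurable f) (hg : Measurable g) :
    NN (fun ξ => ∫ η, f η * g (ξ - η)) ≤ NN f * NN g := by
  rw [← double_lint hf hg]
  exact lintegral_mono fun ξ => enorm_integral_le_lintegral_enorm _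

lemma convPow_measurable {f : Euc d → ℂ} (hf : Measurable f) (n : ℕ) :
    Measurable (convPow f n) := by
  induction n with
  | zero => exact hf
  | succ n ih =>
    show Measurable fun ξ => ∫ η, convPow f n η * f (ξ - η)
    exact (StronglyMeasurable.integral_prod_right'
      (f := fun p : Euc d × Euc d => convPow f n p.2 * f (p.1 - p.2))
      (conv_kernel_meas ih hf).stronglyMeasurable).measurable

lemma NN_convPow_le {f : Euc d → ℂ} (hf : Measurable f) (n : ℕ) :
    NN (convPow f n) ≤ (NN f) ^ (n + 1) := by
  induction n with
  | zero => simp [convPow]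
  | succ n ih =>
    calc NN (convPow f (n+1)) ≤ NN (convPow f n) * NN f :=
          NN_conv_le (convPow_measurable hf n) hf
    _ ≤ (NN f) ^ (n+1) * NN f := mul_le_mul_left ih _
    _ = (NN f) ^ (n+2) := by ring

/-- a.e. integrability of the convolution integrand. -/
lemma conv_integrand_integrable {f g : Euc d → ℂ} (hf : Measurable f) (hg : Measurable g)
    (hfF : NN f ≠ ⊤) (hgF : NN g ≠ ⊤) :
    ∀ᵐ ξ : Euc d, Integrable (fun η => f η * g (ξ - η)) volume := by
  have hmeas : Measurable fun ξ : Euc d => ∫⁻ η, ‖f η * g (ξ - η)‖₊ ∂volume :=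
    Measurable.lintegral_prod_right' (conv_kernel_meas hf hg).nnnorm.coe_nnreal_ennreal
  have hfin : ∫⁻ ξ, ∫⁻ η, ‖f η * g (ξ - η)‖₊ ∂volume ∂volume ≠ ⊤ := by
    rw [double_lint hf hg]; exact ENNReal.mul_ne_top hfF hgF
  filter_upwards [ae_lt_top hmeas hfin] with ξ hξ
  exact ⟨((hf.mul (hg.comp (measurable_const.sub measurable_id))).aestronglyMeasurable), hξ⟩

lemma NN_convPow_sub_le {f g : Euc d → ℂ} (hf : Measurable f) (hg : Measurable g)
    {B : ℝ≥0∞} (hB : B ≠ ⊤) (hfB : NN f ≤ B) (hgB : NN g ≤ B) (n : ℕ) :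
    NN (fun ξ => convPow f n ξ - convPow g n ξ)
      ≤ ((n : ℝ≥0∞) + 1) * B ^ n * NN (fun ξ => f ξ - g ξ) := by
  induction n with
  | zero => simpa [convPow] using le_refl (NN (fun ξ => f ξ - g ξ))
  | succ n ih =>
    set cf := convPow f n with hcf
    set cg := convPow g n with hcg
    have hcfm : Measurable cf := convPow_measurable hf n
    have hcgm : Measurable cg := convPow_measurable hg n
    have hcfF : NN cf ≠ ⊤ :=
      ne_top_of_le_ne_top (ENNReal.pow_ne_top hB) ((NN_convPow_le hf n).trans (pow_le_pow_left' hfB _))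
    have hcgF : NN cg ≠ ⊤ :=
      ne_top_of_le_ne_top (ENNReal.pow_ne_top hB) ((NN_convPow_le hg n).trans (pow_le_pow_left' hgB _))
    have hfF : NN f ≠ ⊤ := ne_top_of_le_ne_top hB hfB
    have hgF : NN g ≠ ⊤ := ne_top_of_le_ne_top hB hgB
    -- a.e. pointwise bound
    have key : ∀ᵐ ξ : Euc d, (‖convPow f (n+1) ξ - convPow g (n+1) ξ‖₊ : ℝ≥0∞)
        ≤ (∫⁻ η, ‖(cf η - cg η) * f (ξ - η)‖₊ ∂volume)
          + ∫⁻ η, ‖cg η * (f (ξ - η) - g (ξ - η))‖₊ ∂volume := by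
      filter_upwards [conv_integrand_integrable hcfm hf hcfF hfF,
        conv_integrand_integrable hcgm hg hcgF hgF] with ξ h1 h2
      have hdiff : convPow f (n+1) ξ - convPow g (n+1) ξ
          = ∫ η, (cf η * f (ξ - η) - cg η * g (ξ - η)) := (integral_sub h1 h2).symm
      rw [hdiff]
      calc (‖∫ η, (cf η * f (ξ - η) - cg η * g (ξ - η))‖₊ : ℝ≥0∞)
          ≤ ∫⁻ η, ‖cf η * f (ξ - η) - cg η * g (ξ - η)‖₊ ∂volume :=
            enorm_integral_le_lintegral_enorm _
        _ ≤ ∫⁻ η, ((‖(cf η - cg η) * f (ξ - η)‖₊ : ℝ≥0∞)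
              + ‖cg η * (f (ξ - η) - g (ξ - η))‖₊) ∂volume := by
            refine lintegral_mono fun η => ?_
            have : cf η * f (ξ - η) - cg η * g (ξ - η)
                = (cf η - cg η) * f (ξ - η) + cg η * (f (ξ - η) - g (ξ - η)) := by ring
            rw [this]
            refine le_trans (ENNReal.coe_le_coe.2 (nnnorm_add_le _ _)) ?_
            rw [ENNReal.coe_add]
        _ = (∫⁻ η, ‖(cf η - cg η) * f (ξ - η)‖₊ ∂volume)
              + ∫⁻ η, ‖cg η * (f (ξ - η) - g (ξ - η))‖₊ ∂volume := by
            refine lintegral_add_left ?_ _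
            exact ((hcfm.sub hcgm).mul (hf.comp (measurable_const.sub measurable_id))).nnnorm.coe_nnreal_ennreal
    calc NN (fun ξ => convPow f (n+1) ξ - convPow g (n+1) ξ)
        ≤ ∫⁻ ξ, ((∫⁻ η, ‖(cf η - cg η) * f (ξ - η)‖₊ ∂volume)
            + ∫⁻ η, ‖cg η * (f (ξ - η) - g (ξ - η))‖₊ ∂volume) ∂volume :=
          lintegral_mono_ae key
      _ = NN (fun ξ => cf ξ - cg ξ) * NN f + NN cg * NN (fun ξ => f ξ - g ξ) := by
          rw [lintegral_add_left (f := fun ξ => ∫⁻ η, ‖(cf η - cg η) * f (ξ - η)‖₊ ∂volume)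
            (Measurable.lintegral_prod_right' (conv_kernel_meas (hcfm.sub hcgm) hf).nnnorm.coe_nnreal_ennreal),
            double_lint (f := fun η => cf η - cg η) (hcfm.sub hcgm) hf, double_lint (g := fun ξ => f ξ - g ξ) hcgm (hf.sub hg)]
      _ ≤ (((n : ℝ≥0∞) + 1) * B ^ n * NN (fun ξ => f ξ - g ξ)) * B
            + B ^ (n+1) * NN (fun ξ => f ξ - g ξ) := by
          exact add_le_add (mul_le_mul' ih hfB)
            (mul_le_mul_left ((NN_convPow_le hg n).trans (pow_le_pow_left' hgB _)) _)
      _ ≤ (((n+1 : ℕ) : ℝ≥0∞) + 1) * B ^ (n+1) * NN (fun ξ => f ξ - g ξ) := by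
          refine le_of_eq ?_
          push_cast
          ring

lemma convPow_succ_congr {f g : Euc d → ℂ} (h : f =ᵐ[(volume : Measure (Euc d))] g) (n : ℕ) :
    convPow f (n + 1) = convPow g (n + 1) := by
  have htrans : ∀ ξ : Euc d, (fun η => f (ξ - η)) =ᵐ[(volume : Measure (Euc d))] fun η => g (ξ - η) := by
    intro ξ
    have mp : MeasurePreserving (fun η : Euc d => ξ - η) volume volume := by
      simp_rw [sub_eq_add_neg]
      exact (measurePreserving_add_left volume ξ).comp (Measure.measurePreserving_neg volume)
    exact mp.quasiMeasurePreserving.ae_eq h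
  induction n with
  | zero =>
    funext ξ
    exact integral_congr_ae (h.mul (htrans ξ))
  | succ n ih =>
    funext ξ
    show (∫ η, convPow f (n+1) η * f (ξ - η)) = ∫ η, convPow g (n+1) η * g (ξ - η)
    rw [ih]
    exact integral_congr_ae (EventuallyEq.mul (EventuallyEq.refl _ _) (htrans ξ))

lemma jb_pos {ξ : Euc d} : 0 < jb ξ := by
  have : (0:ℝ) < 1 + ‖ξ‖ ^ 2 := by positivity
  exact Real.rpow_pos_of_pos this _

lemma jb_sq {ξ : Euc d} : jb ξ ^ 2 = 1 + ‖ξ‖ ^ 2 := by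
  unfold jb
  rw [← Real.rpow_natCast ((1 + ‖ξ‖ ^ 2) ^ ((1:ℝ)/2)) 2, ← Real.rpow_mul (by positivity)]
  norm_num

lemma one_le_jb {ξ : Euc d} : 1 ≤ jb ξ := by
  nlinarith [@jb_pos d ξ, @jb_sq d ξ, sq_nonneg ‖ξ‖]

lemma Kker_abs_le {t : ℝ} (ht : 0 ≤ t) (ξ : Euc d) : |Kker t ξ| ≤ t := by
  unfold Kker
  split_ifs with h
  · exact le_of_eq (abs_of_nonneg ht)
  · have hn : 0 < ‖ξ‖ := norm_pos_iff.2 h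
    rw [abs_div, abs_of_pos hn, div_le_iff₀ hn]
    calc |Real.sin (t * ‖ξ‖)| ≤ |t * ‖ξ‖| := Real.abs_sin_le_abs
    _ = t * ‖ξ‖ := abs_of_nonneg (by positivity)

lemma Kker_abs_le_jb {t : ℝ} (ht : 0 ≤ t) (ht1 : t ≤ 1) (ξ : Euc d) :
    |Kker t ξ| ≤ 2 * (jb ξ)⁻¹ := by
  have hjb := @jb_pos d ξ
  have hsq := @jb_sq d ξ
  have hK1 : |Kker t ξ| ≤ 1 := (Kker_abs_le ht ξ).trans ht1
  have hKnn : 0 ≤ |Kker t ξ| := abs_nonneg _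
  rw [show (2:ℝ) * (jb ξ)⁻¹ = 2 / jb ξ by ring, le_div_iff₀ hjb]
  rcases le_or_gt ‖ξ‖ 1 with hle | hgt
  · nlinarith [norm_nonneg ξ]
  · have hξ0 : ξ ≠ 0 := by
      intro h0
      rw [h0, norm_zero] at hgt
      linarith
    have hKx : |Kker t ξ| * ‖ξ‖ ≤ 1 := by
      unfold Kker
      rw [if_neg hξ0, abs_div, abs_of_pos (by linarith : (0:ℝ) < ‖ξ‖),
        div_mul_cancel₀ _ (by linarith : ‖ξ‖ ≠ 0)]
      exact Real.abs_sin_le_one _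
    nlinarith [sq_nonneg (jb ξ - 2 * ‖ξ‖)]

lemma Kker_uncurry_meas : Measurable fun p : ℝ × Euc d => Kker p.1 p.2 := by
  have hs : MeasurableSet {p : ℝ × Euc d | p.2 = 0} :=
    (measurableSet_singleton (0 : Euc d)).preimage measurable_snd
  have h1 : Measurable fun p : ℝ × Euc d => p.1 := measurable_fst
  have h2 : Measurable fun p : ℝ × Euc d => Real.sin (p.1 * ‖p.2‖) / ‖p.2‖ :=
    (Real.continuous_sin.measurable.comp (measurable_fst.mul measurable_snd.norm)).div
      measurable_snd.norm
  show Measurable fun p : ℝ × Euc d => if p.2 = 0 then p.1 else Real.sin (p.1 * ‖p.2‖) / ‖p.2‖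
  exact Measurable.ite hs h1 h2

lemma convPow_uncurry_meas {w : ℝ → Euc d → ℂ} (hw : Measurable (Function.uncurry w)) (n : ℕ) :
    Measurable (Function.uncurry fun t ξ => convPow (w t) n ξ) := by
  induction n with
  | zero => exact hw
  | succ n ih =>
    have hker : Measurable fun q : (ℝ × Euc d) × Euc d =>
        convPow (w q.1.1) n q.2 * w q.1.1 (q.1.2 - q.2) := by
      have a1 : Measurable fun q : (ℝ × Euc d) × Euc d => convPow (w q.1.1) n q.2 :=
        ih.comp ((measurable_fst.comp measurable_fst).prodMk measurable_snd)
      have a2 : Measurable fun q : (ℝ × Euc d) × Euc d => w q.1.1 (q.1.2 - q.2) :=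
        hw.comp ((measurable_fst.comp measurable_fst).prodMk
          ((measurable_snd.comp measurable_fst).sub measurable_snd))
      exact a1.mul a2
    exact (StronglyMeasurable.integral_prod_right'
      (f := fun q : (ℝ × Euc d) × Euc d => convPow (w q.1.1) n q.2 * w q.1.1 (q.1.2 - q.2))
      hker.stronglyMeasurable).measurable

lemma uncurry_timeint_meas {G : ℝ → ℝ → Euc d → ℂ}
    (hG : Measurable fun q : (ℝ × Euc d) × ℝ => G q.1.1 q.2 q.1.2) :
    Measurable (Function.uncurry fun t ξ => ∫ t' in (0:ℝ)..t, G t t' ξ) := by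
  have key : (Function.uncurry fun t ξ => ∫ t' in (0:ℝ)..t, G t t' ξ)
      = fun p : ℝ × Euc d =>
        (∫ t', (Ioc (0:ℝ) p.1).indicator (fun s => G p.1 s p.2) t')
          - ∫ t', (Ioc p.1 (0:ℝ)).indicator (fun s => G p.1 s p.2) t' := by
    funext p
    show (∫ t' in Ioc (0:ℝ) p.1, G p.1 t' p.2 ∂volume)
        - ∫ t' in Ioc p.1 (0:ℝ), G p.1 t' p.2 ∂volume = _
    rw [← integral_indicator measurableSet_Ioc, ← integral_indicator measurableSet_Ioc]
  rw [key]
  have hS1 : MeasurableSet {q : (ℝ × Euc d) × ℝ | q.2 ∈ Ioc (0:ℝ) q.1.1} := by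
    apply MeasurableSet.inter
    · exact measurableSet_lt measurable_const measurable_snd
    · exact measurableSet_le measurable_snd (measurable_fst.comp measurable_fst)
  have hS2 : MeasurableSet {q : (ℝ × Euc d) × ℝ | q.2 ∈ Ioc q.1.1 (0:ℝ)} := by
    apply MeasurableSet.inter
    · exact measurableSet_lt (measurable_fst.comp measurable_fst) measurable_snd
    · exact measurableSet_le measurable_snd measurable_const
  have h1 : Measurable fun p : ℝ × Euc d =>
      ∫ t', (Ioc (0:ℝ) p.1).indicator (fun s => G p.1 s p.2) t' := by
    have : Measurable fun q : (ℝ × Euc d) × ℝ =>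
        ({q : (ℝ × Euc d) × ℝ | q.2 ∈ Ioc (0:ℝ) q.1.1}).indicator
          (fun q => G q.1.1 q.2 q.1.2) q := hG.indicator hS1
    have heq : ∀ q : (ℝ × Euc d) × ℝ,
        ({q : (ℝ × Euc d) × ℝ | q.2 ∈ Ioc (0:ℝ) q.1.1}).indicator
          (fun q => G q.1.1 q.2 q.1.2) q
        = (Ioc (0:ℝ) q.1.1).indicator (fun s => G q.1.1 s q.1.2) q.2 := by
      intro q
      by_cases h : q.2 ∈ Ioc (0:ℝ) q.1.1
      · rw [Set.indicator_of_mem h, Set.indicator_of_mem (by exact h)]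
      · rw [Set.indicator_of_notMem h, Set.indicator_of_notMem (by exact h)]
    simp_rw [heq] at this
    exact (StronglyMeasurable.integral_prod_right'
      (f := fun q : (ℝ × Euc d) × ℝ => (Ioc (0:ℝ) q.1.1).indicator (fun s => G q.1.1 s q.1.2) q.2)
      this.stronglyMeasurable).measurable
  have h2 : Measurable fun p : ℝ × Euc d =>
      ∫ t', (Ioc p.1 (0:ℝ)).indicator (fun s => G p.1 s p.2) t' := by
    have : Measurable fun q : (ℝ × Euc d) × ℝ =>
        ({q : (ℝ × Euc d) × ℝ | q.2 ∈ Ioc q.1.1 (0:ℝ)}).indicator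
          (fun q => G q.1.1 q.2 q.1.2) q := hG.indicator hS2
    have heq : ∀ q : (ℝ × Euc d) × ℝ,
        ({q : (ℝ × Euc d) × ℝ | q.2 ∈ Ioc q.1.1 (0:ℝ)}).indicator
          (fun q => G q.1.1 q.2 q.1.2) q
        = (Ioc q.1.1 (0:ℝ)).indicator (fun s => G q.1.1 s q.1.2) q.2 := by
      intro q
      by_cases h : q.2 ∈ Ioc q.1.1 (0:ℝ)
      · rw [Set.indicator_of_mem h, Set.indicator_of_mem (by exact h)]
      · rw [Set.indicator_of_notMem h, Set.indicator_of_notMem (by exact h)]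
    simp_rw [heq] at this
    exact (StronglyMeasurable.integral_prod_right'
      (f := fun q : (ℝ × Euc d) × ℝ => (Ioc q.1.1 (0:ℝ)).indicator (fun s => G q.1.1 s q.1.2) q.2)
      this.stronglyMeasurable).measurable
  exact h1.sub h2

lemma time_lint_le (F : ℝ → Euc d → ℂ) (hF : Measurable (Function.uncurry F)) {t : ℝ}
    (ht : 0 ≤ t) :
    ∫⁻ ξ, ‖∫ t' in (0:ℝ)..t, F t' ξ‖₊ ∂volume
      ≤ ∫⁻ t' in Ioc 0 t, (∫⁻ ξ, ‖F t' ξ‖₊ ∂volume) ∂volume := by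
  have h1 : ∀ ξ : Euc d, (∫ t' in (0:ℝ)..t, F t' ξ) = ∫ t' in Ioc (0:ℝ) t, F t' ξ ∂volume := by
    intro ξ
    rw [intervalIntegral.integral_of_le ht]
  calc ∫⁻ ξ, ‖∫ t' in (0:ℝ)..t, F t' ξ‖₊ ∂volume
      ≤ ∫⁻ ξ, ∫⁻ t' in Ioc (0:ℝ) t, ‖F t' ξ‖₊ ∂volume ∂volume := by
        refine lintegral_mono fun ξ => ?_
        rw [h1 ξ]
        exact enorm_integral_le_lintegral_enorm _
    _ = ∫⁻ t' in Ioc 0 t, (∫⁻ ξ, ‖F t' ξ‖₊ ∂volume) ∂volume := by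
        exact lintegral_lintegral_swap ((hF.comp measurable_swap).nnnorm.coe_nnreal_ennreal.aemeasurable)

lemma time_integrand_integrable (F : ℝ → Euc d → ℂ) (hF : Measurable (Function.uncurry F))
    {t : ℝ} (ht : 0 ≤ t)
    (hfin : (∫⁻ t' in Ioc (0:ℝ) t, (∫⁻ ξ, ‖F t' ξ‖₊ ∂volume) ∂volume) ≠ ⊤) :
    ∀ᵐ ξ : Euc d, IntervalIntegrable (fun t' => F t' ξ) volume 0 t := by
  have hmeas : Measurable fun ξ : Euc d => ∫⁻ t' in Ioc (0:ℝ) t, ‖F t' ξ‖₊ ∂volume :=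
    Measurable.lintegral_prod_right' (ν := volume.restrict (Ioc (0:ℝ) t))
      ((hF.comp measurable_swap).nnnorm.coe_nnreal_ennreal)
  have hswap : ∫⁻ ξ, (∫⁻ t' in Ioc (0:ℝ) t, ‖F t' ξ‖₊ ∂volume) ∂volume
      = ∫⁻ t' in Ioc (0:ℝ) t, (∫⁻ ξ, ‖F t' ξ‖₊ ∂volume) ∂volume :=
    lintegral_lintegral_swap ((hF.comp measurable_swap).nnnorm.coe_nnreal_ennreal.aemeasurable)
  have hae : ∀ᵐ ξ : Euc d, (∫⁻ t' in Ioc (0:ℝ) t, ‖F t' ξ‖₊ ∂volume) < ⊤ := by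
    apply ae_lt_top hmeas
    rw [hswap]; exact hfin
  filter_upwards [hae] with ξ hξ
  rw [intervalIntegrable_iff, uIoc_of_le ht]
  exact ⟨(hF.comp (measurable_id.prodMk measurable_const)).aestronglyMeasurable, hξ⟩

lemma exists_vrep {T : ℝ} (hT : 0 < T) (v : ℝ → Lp ℂ 1 (volume : Measure (Euc d)))
    (hv : ContinuousOn v (Icc 0 T)) :
    ∃ w : ℝ → Euc d → ℂ, Measurable (Function.uncurry w) ∧
      ∀ᵐ t ∂(volume.restrict (Icc (0:ℝ) T)),
        (w t) =ᵐ[(volume : Measure (Euc d))] (fun ξ => v t ξ) := by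
  -- uniform continuity
  have huc := (isCompact_Icc (a := (0:ℝ)) (b := T)).uniformContinuousOn_of_continuous hv
  rw [Metric.uniformContinuousOn_iff] at huc
  have hδ : ∀ j : ℕ, ∃ δ : ℝ, 0 < δ ∧ ∀ s ∈ Icc (0:ℝ) T, ∀ s' ∈ Icc (0:ℝ) T,
      dist s s' < δ → dist (v s) (v s') < (1/2)^j := by
    intro j
    obtain ⟨δ, hδpos, h⟩ := huc ((1/2)^j) (by positivity)
    exact ⟨δ, hδpos, h⟩
  choose δ hδpos hδ using hδ
  have hN : ∀ j : ℕ, ∃ N : ℕ, T / δ j < N := fun j => exists_nat_gt _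
  choose N hN using hN
  have hNpos : ∀ j, 0 < (N j : ℝ) := by
    intro j
    have : (0:ℝ) < T / δ j := div_pos hT (hδpos j)
    linarith [hN j]
  -- grid map
  set r : ℕ → ℝ → ℝ := fun j t => T * (⌊(N j : ℝ) * t / T⌋ : ℝ) / (N j : ℝ) with hr
  have hr_mem : ∀ j, ∀ t ∈ Icc (0:ℝ) T, r j t ∈ Icc (0:ℝ) T ∧ dist (r j t) t < δ j := by
    intro j t ht
    obtain ⟨ht0, htT⟩ := ht
    have hN0 : (N j : ℝ) ≠ 0 := ne_of_gt (hNpos j)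
    have hT0 : T ≠ 0 := ne_of_gt hT
    have hfl_le : (⌊(N j : ℝ) * t / T⌋ : ℝ) ≤ (N j : ℝ) * t / T := Int.floor_le _
    have hfl_gt : (N j : ℝ) * t / T - 1 < (⌊(N j : ℝ) * t / T⌋ : ℝ) := Int.sub_one_lt_floor _
    have hfl_nonneg : (0:ℝ) ≤ (⌊(N j : ℝ) * t / T⌋ : ℝ) := by
      have : (0:ℝ) ≤ (N j : ℝ) * t / T := by positivity
      exact_mod_cast Int.floor_nonneg.2 this
    have h1 : r j t ≤ t := by
      rw [hr]
      rw [div_le_iff₀ (hNpos j)]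
      calc T * (⌊(N j : ℝ) * t / T⌋ : ℝ) ≤ T * ((N j : ℝ) * t / T) := by
            exact mul_le_mul_of_nonneg_left hfl_le (le_of_lt hT)
      _ = t * (N j : ℝ) := by field_simp
    have h2 : t - T / (N j : ℝ) < r j t := by
      rw [hr]
      rw [lt_div_iff₀ (hNpos j)]
      have := mul_lt_mul_of_pos_left hfl_gt hT
      have e1 : (t - T / (N j : ℝ)) * (N j : ℝ) = T * ((N j : ℝ) * t / T - 1) := by
        field_simp
      rw [e1]
      exact this
    have h3 : (0:ℝ) ≤ r j t := by
      rw [hr]; positivity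
    have hTN : T / (N j : ℝ) < δ j := by
      rw [div_lt_iff₀ (hNpos j)]
      have h := hN j
      rw [div_lt_iff₀ (hδpos j)] at h
      linarith [h]
    constructor
    · exact ⟨h3, h1.trans htT⟩
    · rw [Real.dist_eq, abs_of_nonpos (by linarith)]
      linarith
  -- jointly measurable approximants
  set g : ℕ → ℝ × Euc d → ℂ := fun j p => (v (r j p.1) : Euc d → ℂ) p.2 with hg
  have hgmeas : ∀ j, Measurable (g j) := by
    intro j
    have hφ : Measurable fun p : ℝ × Euc d => ((⌊(N j : ℝ) * p.1 / T⌋ : ℤ), p.2) := by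
      refine Measurable.prodMk ?_ measurable_snd
      exact Int.measurable_floor.comp ((measurable_fst.const_mul _).div_const _)
    have hψ : Measurable fun q : Euc d × ℤ =>
        (v (T * (q.2 : ℝ) / (N j : ℝ)) : Euc d → ℂ) q.1 := by
      apply measurable_from_prod_countable_left
      intro z
      exact (Lp.stronglyMeasurable (v (T * (z : ℝ) / (N j : ℝ)))).measurable
    have : g j = fun p : ℝ × Euc d =>
        (fun q : Euc d × ℤ => (v (T * (q.2 : ℝ) / (N j : ℝ)) : Euc d → ℂ) q.1)
          (p.2, ⌊(N j : ℝ) * p.1 / T⌋) := rfl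
    rw [this]
    exact hψ.comp (measurable_snd.prodMk
      (Int.measurable_floor.comp ((measurable_fst.const_mul _).div_const _)))
  -- L¹ approximation bound
  have happrox : ∀ j, ∀ t ∈ Icc (0:ℝ) T,
      (∫⁻ ξ, ‖g j (t, ξ) - v t ξ‖₊ ∂(volume : Measure (Euc d)))
        ≤ ENNReal.ofReal ((1/2)^j) := by
    intro j t ht
    obtain ⟨hmem, hdist⟩ := hr_mem j t ht
    have hd := hδ j (r j t) hmem t ht hdist
    have h1 : (fun ξ => g j (t, ξ) - v t ξ)
        =ᵐ[(volume : Measure (Euc d))] (v (r j t) - v t : Lp ℂ 1 (volume : Measure (Euc d))) := by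
      filter_upwards [Lp.coeFn_sub (v (r j t)) (v t)] with ξ hξ
      rw [hξ]; rfl
    calc (∫⁻ ξ, ‖g j (t, ξ) - v t ξ‖₊ ∂(volume : Measure (Euc d)))
        = eLpNorm (fun ξ => g j (t, ξ) - v t ξ) 1 volume := by rw [eLpNorm_one_eq_lintegral_enorm]; rfl
      _ = eLpNorm ((v (r j t) - v t : Lp ℂ 1 (volume : Measure (Euc d))) : Euc d → ℂ) 1 volume :=
          eLpNorm_congr_ae h1
      _ ≤ ENNReal.ofReal ((1/2)^j) := by
          rw [← ENNReal.ofReal_toReal (Lp.eLpNorm_lt_top _).ne]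
          apply ENNReal.ofReal_le_ofReal
          rw [← Lp.norm_def]
          calc ‖v (r j t) - v t‖ = dist (v (r j t)) (v t) := (dist_eq_norm _ _).symm
          _ ≤ (1/2)^j := le_of_lt hd
  -- Borel–Cantelli on the product
  set μP := (volume.restrict (Icc (0:ℝ) T)).prod (volume : Measure (Euc d)) with hμP
  have hvmeas : ∀ t : ℝ, Measurable (fun ξ : Euc d => v t ξ) := fun t =>
    (Lp.stronglyMeasurable (v t)).measurable
  have hsum_j : ∀ j : ℕ, (∫⁻ p, ‖g j p - g (j+1) p‖₊ ∂μP)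
      ≤ ENNReal.ofReal ((1/2)^j) * 2 * ENNReal.ofReal T := by
    intro j
    have hmeas : Measurable fun p : ℝ × Euc d => ((‖g j p - g (j+1) p‖₊ : ℝ≥0∞)) :=
      ((hgmeas j).sub (hgmeas (j+1))).nnnorm.coe_nnreal_ennreal
    rw [hμP, lintegral_prod _ hmeas.aemeasurable]
    have inner_le : ∀ t ∈ Icc (0:ℝ) T,
        (∫⁻ ξ, ‖g j (t, ξ) - g (j+1) (t, ξ)‖₊ ∂(volume : Measure (Euc d)))
          ≤ ENNReal.ofReal ((1/2)^j) * 2 := by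
      intro t ht
      have tri : ∀ ξ : Euc d, (‖g j (t, ξ) - g (j+1) (t, ξ)‖₊ : ℝ≥0∞)
          ≤ (‖g j (t, ξ) - v t ξ‖₊ : ℝ≥0∞) + ‖g (j+1) (t, ξ) - v t ξ‖₊ := by
        intro ξ
        have : g j (t, ξ) - g (j+1) (t, ξ)
            = (g j (t, ξ) - v t ξ) - (g (j+1) (t, ξ) - v t ξ) := by ring
        rw [this]
        refine le_trans (ENNReal.coe_le_coe.2 (nnnorm_sub_le _ _)) ?_
        rw [ENNReal.coe_add]
      calc (∫⁻ ξ, ‖g j (t, ξ) - g (j+1) (t, ξ)‖₊ ∂(volume : Measure (Euc d)))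
          ≤ ∫⁻ ξ, ((‖g j (t, ξ) - v t ξ‖₊ : ℝ≥0∞) + ‖g (j+1) (t, ξ) - v t ξ‖₊)
              ∂(volume : Measure (Euc d)) := lintegral_mono tri
        _ = (∫⁻ ξ, ‖g j (t, ξ) - v t ξ‖₊ ∂(volume : Measure (Euc d)))
              + ∫⁻ ξ, ‖g (j+1) (t, ξ) - v t ξ‖₊ ∂(volume : Measure (Euc d)) := by
            refine lintegral_add_left ?_ _
            exact (((hgmeas j).comp ((measurable_prodMk_left : Measurable fun ξ : Euc d => (t, ξ)))).sub (hvmeas t)).nnnorm.coe_nnreal_ennreal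
        _ ≤ ENNReal.ofReal ((1/2)^j) + ENNReal.ofReal ((1/2)^(j+1)) :=
            add_le_add (happrox j t ht) (happrox (j+1) t ht)
        _ ≤ ENNReal.ofReal ((1/2)^j) * 2 := by
            rw [mul_two]
            refine add_le_add le_rfl (ENNReal.ofReal_le_ofReal ?_)
            have : ((1:ℝ)/2)^(j+1) ≤ (1/2)^j := by
              apply pow_le_pow_of_le_one (by norm_num) (by norm_num)
              omega
            exact this
    calc (∫⁻ t in Icc (0:ℝ) T, (∫⁻ ξ, ‖g j (t, ξ) - g (j+1) (t, ξ)‖₊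
            ∂(volume : Measure (Euc d))) ∂volume)
        ≤ ∫⁻ _ in Icc (0:ℝ) T, (ENNReal.ofReal ((1/2)^j) * 2) ∂volume := by
          refine lintegral_mono_ae ?_
          rw [ae_restrict_iff' measurableSet_Icc]
          exact ae_of_all _ inner_le
      _ = ENNReal.ofReal ((1/2)^j) * 2 * volume (Icc (0:ℝ) T) := by
          rw [setLIntegral_const]
      _ ≤ ENNReal.ofReal ((1/2)^j) * 2 * ENNReal.ofReal T := by
          rw [Real.volume_Icc]
          exact mul_le_mul_right (ENNReal.ofReal_le_ofReal (by linarith)) _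
  have htsum : (∑' j : ℕ, ∫⁻ p, ‖g j p - g (j+1) p‖₊ ∂μP) ≠ ⊤ := by
    refine ne_top_of_le_ne_top ?_ (ENNReal.tsum_le_tsum hsum_j)
    have : ∀ j : ℕ, ENNReal.ofReal ((1/2)^j) * 2 * ENNReal.ofReal T
        = (ENNReal.ofReal (1/2))^j * (2 * ENNReal.ofReal T) := by
      intro j
      rw [ENNReal.ofReal_pow (by norm_num)]
      ring
    simp_rw [this]
    rw [ENNReal.tsum_mul_right]
    refine ENNReal.mul_ne_top ?_ (ENNReal.mul_ne_top (by norm_num) ENNReal.ofReal_ne_top)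
    rw [ENNReal.tsum_geometric]
    simp only [ne_eq, ENNReal.inv_eq_top, tsub_eq_zero_iff_le]
    intro h
    have := ENNReal.ofReal_lt_one.2 (by norm_num : (1:ℝ)/2 < 1)
    exact absurd h (not_le.2 this)
  have hae_conv : ∀ᵐ p ∂μP, ∃ l : ℂ, Tendsto (fun j => g j p) atTop (𝓝 l) := by
    have hmeas_sum : Measurable fun p : ℝ × Euc d =>
        ∑' j : ℕ, (‖g j p - g (j+1) p‖₊ : ℝ≥0∞) :=
      Measurable.ennreal_tsum fun j => ((hgmeas j).sub (hgmeas (j+1))).nnnorm.coe_nnreal_ennreal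
    have hfin : (∫⁻ p, (∑' j : ℕ, (‖g j p - g (j+1) p‖₊ : ℝ≥0∞)) ∂μP) ≠ ⊤ := by
      rw [lintegral_tsum (f := fun j p => (‖g j p - g (j+1) p‖₊ : ℝ≥0∞)) fun j => ((hgmeas j).sub (hgmeas (j+1))).nnnorm.coe_nnreal_ennreal.aemeasurable]
      exact htsum
    filter_upwards [ae_lt_top hmeas_sum hfin] with p hp
    have hsummable : Summable fun j : ℕ => dist (g j p) (g (j+1) p) := by
      have h1 : Summable fun j : ℕ => (‖g j p - g (j+1) p‖₊ : ℝ≥0) := by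
        rw [← ENNReal.tsum_coe_ne_top_iff_summable]
        exact hp.ne
      have h2 := NNReal.summable_coe.2 h1
      have he : (fun j : ℕ => dist (g j p) (g (j+1) p))
          = fun j : ℕ => ((‖g j p - g (j+1) p‖₊ : ℝ≥0) : ℝ) := by
        funext j
        rw [dist_eq_norm, coe_nnnorm]
      rw [he]
      exact h2
    exact cauchySeq_tendsto_of_complete (cauchySeq_of_summable_dist hsummable)
  obtain ⟨w', hw'meas, hw'tend⟩ := measurable_limit_of_tendsto_metrizable_ae
    (fun j => (hgmeas j).aemeasurable (μ := μP)) hae_conv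
  refine ⟨fun t ξ => w' (t, ξ), hw'meas, ?_⟩
  have h2 := Measure.ae_ae_of_ae_prod hw'tend
  filter_upwards [h2, ae_restrict_mem measurableSet_Icc] with t htt htIcc
  -- for this t: a.e. ξ, g j (t,ξ) → w' (t,ξ); and eLpNorm (g j t - v t) → 0
  have hptmeas : ∀ j, Measurable fun ξ : Euc d => (‖g j (t, ξ) - v t ξ‖₊ : ℝ≥0∞) :=
    fun j => (((hgmeas j).comp ((measurable_prodMk_left : Measurable fun ξ : Euc d => (t, ξ)))).sub (hvmeas t)).nnnorm.coe_nnreal_ennreal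
  have hzero : (∫⁻ ξ, ‖w' (t, ξ) - v t ξ‖₊ ∂(volume : Measure (Euc d))) = 0 := by
    refine le_antisymm ?_ (zero_le)
    have hlim : ∀ᵐ ξ ∂(volume : Measure (Euc d)),
        (‖w' (t, ξ) - v t ξ‖₊ : ℝ≥0∞)
          = liminf (fun j => (‖g j (t, ξ) - v t ξ‖₊ : ℝ≥0∞)) atTop := by
      filter_upwards [htt] with ξ hξ
      have : Tendsto (fun j => (‖g j (t, ξ) - v t ξ‖₊ : ℝ≥0∞)) atTop
          (𝓝 (‖w' (t, ξ) - v t ξ‖₊ : ℝ≥0∞)) := by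
        have hsub : Tendsto (fun j => g j (t, ξ) - v t ξ) atTop (𝓝 (w' (t, ξ) - v t ξ)) :=
          hξ.sub tendsto_const_nhds
        exact (ENNReal.continuous_coe.tendsto _).comp ((continuous_nnnorm.tendsto _).comp hsub)
      exact this.liminf_eq.symm
    calc (∫⁻ ξ, ‖w' (t, ξ) - v t ξ‖₊ ∂(volume : Measure (Euc d)))
        ≤ ∫⁻ ξ, liminf (fun j => (‖g j (t, ξ) - v t ξ‖₊ : ℝ≥0∞)) atTop
            ∂(volume : Measure (Euc d)) := le_of_eq (lintegral_congr_ae hlim)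
      _ ≤ liminf (fun j => ∫⁻ ξ, (‖g j (t, ξ) - v t ξ‖₊ : ℝ≥0∞)
            ∂(volume : Measure (Euc d))) atTop := lintegral_liminf_le hptmeas
      _ ≤ liminf (fun j => ENNReal.ofReal ((1/2)^j)) atTop := by
          refine liminf_le_liminf (Filter.Eventually.of_forall fun j => happrox j t htIcc)
      _ ≤ 0 := le_of_eq (by
          have : Tendsto (fun j : ℕ => ENNReal.ofReal ((1/2)^j)) atTop (𝓝 0) := by
            rw [show (0:ℝ≥0∞) = ENNReal.ofReal 0 by simp]
            apply ENNReal.tendsto_ofReal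
            exact tendsto_pow_atTop_nhds_zero_of_lt_one (by norm_num) (by norm_num)
          exact this.liminf_eq)
  have := (lintegral_eq_zero_iff ((hw'meas.comp
    ((measurable_prodMk_left : Measurable fun ξ : Euc d => (t, ξ)))).sub (hvmeas t)).nnnorm.coe_nnreal_ennreal).1 hzero
  filter_upwards [this] with ξ hξ
  have h0 : w' (t, ξ) - v t ξ = 0 := by simpa using hξ
  exact sub_eq_zero.1 h0

lemma real_facts (k : ℕ) (hk : 2 ≤ k) (M T : ℝ) (hM : 0 < M)
    (hT0 : 0 < T) (hT1 : T ≤ 1)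
    (hTc : T ≤ (1/((k+1)*2^k)) * M ^ (-((k:ℝ)-1)/2)) :
    T^2*(2*M)^k ≤ M ∧ T*T*(k:ℝ)*(2*M)^(k-1) ≤ 1/2 := by
  set c : ℝ := 1/((k+1)*2^k) with hc
  have hcpos : 0 < c := by positivity
  have hKpos : (0:ℝ) < M ^ (((k:ℝ)-1)) := Real.rpow_pos_of_pos hM _
  have hxpos : (0:ℝ) < M ^ (-((k:ℝ)-1)/2) := Real.rpow_pos_of_pos hM _
  -- square the T bound
  have hT2 : T^2 ≤ c^2 * (M ^ ((k:ℝ)-1))⁻¹ := by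
    have h1 : T^2 ≤ (c * M ^ (-((k:ℝ)-1)/2))^2 := by
      apply pow_le_pow_left₀ (le_of_lt hT0) hTc
    have h2 : (M ^ (-((k:ℝ)-1)/2))^2 = M ^ (-((k:ℝ)-1)) := by
      rw [← Real.rpow_natCast (M ^ (-((k:ℝ)-1)/2)) 2, ← Real.rpow_mul (le_of_lt hM)]
      norm_num
    have h3 : M ^ (-((k:ℝ)-1)) = (M ^ ((k:ℝ)-1))⁻¹ := Real.rpow_neg (le_of_lt hM) _
    calc T^2 ≤ (c * M ^ (-((k:ℝ)-1)/2))^2 := h1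
    _ = c^2 * (M ^ (-((k:ℝ)-1)/2))^2 := by ring
    _ = c^2 * (M ^ ((k:ℝ)-1))⁻¹ := by rw [h2, h3]
  have hT2' : T^2 * M ^ ((k:ℝ)-1) ≤ c^2 := by
    calc T^2 * M ^ ((k:ℝ)-1) ≤ (c^2 * (M ^ ((k:ℝ)-1))⁻¹) * M ^ ((k:ℝ)-1) :=
          mul_le_mul_of_nonneg_right hT2 (le_of_lt hKpos)
    _ = c^2 := by field_simp
  -- M^k decomposition
  have hMk : M ^ k = M ^ ((k:ℝ)-1) * M := by
    have h0 : M ^ ((k:ℝ)) = M ^ (((k:ℝ)-1) + 1) := by norm_num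
    rw [← Real.rpow_natCast M k, h0, Real.rpow_add hM, Real.rpow_one]
  have hMk1 : M ^ (k-1) = M ^ ((k:ℝ)-1) := by
    rw [← Real.rpow_natCast M (k-1)]
    congr 1
    have : ((k - 1 : ℕ) : ℝ) = (k:ℝ) - 1 := by
      have := Nat.cast_sub (le_trans one_le_two hk) (R := ℝ) (m := 1) (n := k)
      simpa using this
    exact this
  have h2k : (1:ℝ) ≤ 2^k := one_le_pow₀ one_le_two
  have hKnn : (0:ℝ) ≤ (k:ℝ) := Nat.cast_nonneg k
  have hk1 : (1:ℝ) ≤ (k:ℝ)+1 := by linarith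
  have hK1sq : (1:ℝ) ≤ ((k:ℝ)+1)^2 := by nlinarith
  constructor
  · -- T^2 (2M)^k ≤ M
    have hc2 : c^2 * 2^k ≤ 1 := by
      rw [hc]
      rw [div_pow, one_pow, div_mul_eq_mul_div, one_mul, div_le_one (by positivity)]
      have h1 : (2:ℝ)^k ≤ ((2:ℝ)^k)^2 := by nlinarith
      have h2 : ((2:ℝ)^k)^2 ≤ (((k:ℝ)+1)*2^k)^2 := by
        rw [mul_pow]
        nlinarith [sq_nonneg ((2:ℝ)^k)]
      linarith
    calc T^2*(2*M)^k = (T^2 * M ^ ((k:ℝ)-1)) * (2^k * M) := by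
          rw [mul_pow, hMk]; ring
    _ ≤ c^2 * (2^k * M) := by
          apply mul_le_mul_of_nonneg_right hT2' (by positivity)
    _ = (c^2 * 2^k) * M := by ring
    _ ≤ 1 * M := mul_le_mul_of_nonneg_right hc2 (le_of_lt hM)
    _ = M := one_mul M
  · -- T·T·k·(2M)^{k-1} ≤ 1/2
    have hc2 : c^2 * ((k:ℝ) * 2^(k-1)) ≤ 1/2 := by
      rw [hc, div_pow, one_pow, div_mul_eq_mul_div, one_mul]
      rw [div_le_div_iff₀ (by positivity) (by norm_num)]
      have h2 : (2:ℝ)^(k-1) * 2 = 2^k := by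
        rw [← pow_succ]
        congr 1
        omega
      have e1 : (k:ℝ) * 2^(k-1) * 2 = (k:ℝ) * 2^k := by
        rw [mul_assoc, h2]
      rw [e1, mul_pow]
      have s1 : (k:ℝ) * 2^k ≤ ((k:ℝ)+1)^2 * 2^k := by
        apply mul_le_mul_of_nonneg_right _ (by positivity)
        nlinarith [sq_nonneg ((k:ℝ))]
      have s2 : ((k:ℝ)+1)^2 * 2^k ≤ ((k:ℝ)+1)^2 * ((2:ℝ)^k)^2 := by
        apply mul_le_mul_of_nonneg_left _ (by positivity)
        nlinarith
      linarith
    have h2M : (2*M)^(k-1) = 2^(k-1) * M ^ ((k:ℝ)-1) := by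
      rw [mul_pow, hMk1]
    calc T*T*(k:ℝ)*(2*M)^(k-1) = (T^2 * M ^ ((k:ℝ)-1)) * ((k:ℝ) * 2^(k-1)) := by
          rw [h2M]; ring
    _ ≤ c^2 * ((k:ℝ) * 2^(k-1)) := mul_le_mul_of_nonneg_right hT2' (by positivity)
    _ ≤ 1/2 := hc2

/-- canonical Picard iterates -/
def Qit (d k : ℕ) (g₀ g₁ : Euc d → ℂ) : ℕ → ℝ → Euc d → ℂ
  | 0 => fun t ξ => (Real.cos (t * ‖ξ‖) : ℂ) * g₀ ξ + (Kker t ξ : ℂ) * g₁ ξ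
  | (m+1) => fun t ξ => ((Real.cos (t * ‖ξ‖) : ℂ) * g₀ ξ + (Kker t ξ : ℂ) * g₁ ξ)
      + ∫ t' in (0:ℝ)..t, (Kker (t - t') ξ : ℂ) * convPow (Qit d k g₀ g₁ m t') (k - 1) ξ

section main

variable {k : ℕ} {g₀ g₁ : Euc d → ℂ}

lemma NN_K_mul_le {h : Euc d → ℂ} {s C : ℝ} (hs : 0 ≤ s) (hsC : s ≤ C) :
    NN (fun ξ => ((Kker s ξ : ℝ) : ℂ) * h ξ) ≤ ENNReal.ofReal C * NN h := by
  have hpt : ∀ ξ : Euc d, (‖((Kker s ξ : ℝ) : ℂ) * h ξ‖₊ : ℝ≥0∞)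
      ≤ ENNReal.ofReal C * ‖h ξ‖₊ := by
    intro ξ
    rw [nnnorm_mul, ENNReal.coe_mul]
    refine mul_le_mul_left ?_ _
    have : (‖((Kker s ξ : ℝ) : ℂ)‖₊ : ℝ≥0∞) = ENNReal.ofReal |Kker s ξ| := by
      rw [Complex.nnnorm_real]
      exact Real.enorm_eq_ofReal_abs _
    rw [this]
    exact ENNReal.ofReal_le_ofReal ((Kker_abs_le hs ξ).trans hsC)
  calc NN (fun ξ => ((Kker s ξ : ℝ) : ℂ) * h ξ) ≤ ∫⁻ ξ, ENNReal.ofReal C * ‖h ξ‖₊ ∂volume :=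
        lintegral_mono hpt
  _ = ENNReal.ofReal C * NN h := lintegral_const_mul' _ _ ENNReal.ofReal_ne_top

lemma timeavg_bound {u : ℝ → Euc d → ℂ} (hu : Measurable (Function.uncurry u)) {t T : ℝ}
    (ht0 : 0 ≤ t) (htT : t ≤ T) {B : ℝ≥0∞} (n : ℕ)
    (hB : ∀ᵐ t' ∂(volume.restrict (Ioc (0:ℝ) t)), NN (u t') ≤ B) :
    (∫⁻ t' in Ioc (0:ℝ) t,
        (∫⁻ ξ, ‖((Kker (t - t') ξ : ℝ) : ℂ) * convPow (u t') n ξ‖₊ ∂volume) ∂volume)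
      ≤ ENNReal.ofReal T * B ^ (n+1) * ENNReal.ofReal t := by
  have step : ∀ᵐ t' ∂(volume.restrict (Ioc (0:ℝ) t)),
      (∫⁻ ξ, ‖((Kker (t - t') ξ : ℝ) : ℂ) * convPow (u t') n ξ‖₊ ∂volume)
        ≤ ENNReal.ofReal T * B ^ (n+1) := by
    filter_upwards [hB, ae_restrict_mem measurableSet_Ioc] with t' hBt' ht'
    have hsec : Measurable (u t') := hu.comp measurable_prodMk_left
    calc (∫⁻ ξ, ‖((Kker (t - t') ξ : ℝ) : ℂ) * convPow (u t') n ξ‖₊ ∂volume)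
        ≤ ENNReal.ofReal T * NN (convPow (u t') n) :=
          NN_K_mul_le (by linarith [ht'.2] : 0 ≤ t - t') (by linarith [ht'.1] : t - t' ≤ T)
      _ ≤ ENNReal.ofReal T * ((NN (u t')) ^ (n+1)) :=
          mul_le_mul_right (NN_convPow_le hsec n) _
      _ ≤ ENNReal.ofReal T * B ^ (n+1) :=
          mul_le_mul_right (pow_le_pow_left' hBt' _) _
  calc (∫⁻ t' in Ioc (0:ℝ) t,
        (∫⁻ ξ, ‖((Kker (t - t') ξ : ℝ) : ℂ) * convPow (u t') n ξ‖₊ ∂volume) ∂volume)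
      ≤ ∫⁻ _ in Ioc (0:ℝ) t, (ENNReal.ofReal T * B ^ (n+1)) ∂volume :=
        lintegral_mono_ae step
    _ = ENNReal.ofReal T * B ^ (n+1) * volume (Ioc (0:ℝ) t) := setLIntegral_const _ _
    _ = ENNReal.ofReal T * B ^ (n+1) * ENNReal.ofReal t := by
        rw [Real.volume_Ioc, sub_zero]

lemma integrand_uncurry_meas {u : ℝ → Euc d → ℂ} (hu : Measurable (Function.uncurry u))
    (t : ℝ) (n : ℕ) :
    Measurable (Function.uncurry fun t' ξ =>
      ((Kker (t - t') ξ : ℝ) : ℂ) * convPow (u t') n ξ) := by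
  have h1 : Measurable fun p : ℝ × Euc d => ((Kker (t - p.1) p.2 : ℝ) : ℂ) :=
    Complex.measurable_ofReal.comp
      (Kker_uncurry_meas.comp ((measurable_const.sub measurable_fst).prodMk measurable_snd))
  have h2 : Measurable fun p : ℝ × Euc d => convPow (u p.1) n p.2 :=
    convPow_uncurry_meas hu n
  exact h1.mul h2

lemma G_uncurry_meas {u : ℝ → Euc d → ℂ} (hu : Measurable (Function.uncurry u)) (n : ℕ) :
    Measurable fun q : (ℝ × Euc d) × ℝ =>
      ((Kker (q.1.1 - q.2) q.1.2 : ℝ) : ℂ) * convPow (u q.2) n q.1.2 := by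
  have h1 : Measurable fun q : (ℝ × Euc d) × ℝ => ((Kker (q.1.1 - q.2) q.1.2 : ℝ) : ℂ) :=
    Complex.measurable_ofReal.comp (Kker_uncurry_meas.comp
      (((measurable_fst.comp measurable_fst).sub measurable_snd).prodMk
        (measurable_snd.comp measurable_fst)))
  have h2 : Measurable fun q : (ℝ × Euc d) × ℝ => convPow (u q.2) n q.1.2 :=
    (convPow_uncurry_meas hu n).comp
      (measurable_snd.prodMk (measurable_snd.comp measurable_fst))
  exact h1.mul h2

lemma Qit_uncurry_meas (hg₀ : Measurable g₀) (hg₁ : Measurable g₁) (m : ℕ) :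
    Measurable (Function.uncurry (Qit d k g₀ g₁ m)) := by
  have h0 : Measurable (Function.uncurry (Qit d k g₀ g₁ 0)) := by
    show Measurable fun p : ℝ × Euc d =>
      (Real.cos (p.1 * ‖p.2‖) : ℂ) * g₀ p.2 + (Kker p.1 p.2 : ℂ) * g₁ p.2
    have hcos : Measurable fun p : ℝ × Euc d => (Real.cos (p.1 * ‖p.2‖) : ℂ) :=
      Complex.measurable_ofReal.comp
        (Real.continuous_cos.measurable.comp (measurable_fst.mul measurable_snd.norm))
    have hK : Measurable fun p : ℝ × Euc d => ((Kker p.1 p.2 : ℝ) : ℂ) :=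
      Complex.measurable_ofReal.comp Kker_uncurry_meas
    exact (hcos.mul (hg₀.comp measurable_snd)).add (hK.mul (hg₁.comp measurable_snd))
  induction m with
  | zero => exact h0
  | succ m ih =>
    have hint := uncurry_timeint_meas
      (G := fun t t' ξ => ((Kker (t - t') ξ : ℝ) : ℂ) * convPow (Qit d k g₀ g₁ m t') (k-1) ξ)
      (G_uncurry_meas ih (k-1))
    show Measurable fun p : ℝ × Euc d =>
      ((Real.cos (p.1 * ‖p.2‖) : ℂ) * g₀ p.2 + (Kker p.1 p.2 : ℂ) * g₁ p.2)
      + ∫ t' in (0:ℝ)..p.1, (Kker (p.1 - t') p.2 : ℂ) * convPow (Qit d k g₀ g₁ m t') (k-1) p.2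
    exact h0.add hint

end main


/-- convergence of the Picard iterates to the `FL¹` solution of NLW
on the local existence time interval. -/
theorem picard_iterates_converge (d k : ℕ) (hd : 1 ≤ d) (hk : 2 ≤ k) :
    ∃ c : ℝ, 0 < c ∧
      ∀ (g₀ g₁ : Euc d → ℂ), Measurable g₀ → Measurable g₁ →
        Integrable g₀ → Integrable (fun ξ => ((jb ξ : ℂ))⁻¹ * g₁ ξ) →
        ∀ M : ℝ, 0 < M →
        eLpNorm g₀ 1 volume + 2 * eLpNorm (fun ξ => ((jb ξ : ℂ))⁻¹ * g₁ ξ) 1 volume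
          ≤ ENNReal.ofReal M →
        ∀ T : ℝ, 0 < T → T ≤ min (c * M ^ (-((k : ℝ) - 1) / 2)) 1 →
        ∀ v : ℝ → Lp ℂ 1 (volume : Measure (Euc d)),
          ContinuousOn v (Set.Icc 0 T) →
          (∀ t ∈ Set.Icc (0 : ℝ) T, eLpNorm (fun ξ => v t ξ) 1 volume ≤ ENNReal.ofReal (2 * M)) →
          (∀ t ∈ Set.Icc (0 : ℝ) T, ∀ᵐ ξ : Euc d,
            v t ξ = (Real.cos (t * ‖ξ‖) : ℂ) * g₀ ξ + (Kker t ξ : ℂ) * g₁ ξ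
              + ∫ t' in (0 : ℝ)..t,
                  (Kker (t - t') ξ : ℂ) * convPow (fun x => v t' x) (k - 1) ξ) →
        ∀ P : ℕ → ℝ → Euc d → ℂ,
          (∀ t ξ, P 0 t ξ = (Real.cos (t * ‖ξ‖) : ℂ) * g₀ ξ + (Kker t ξ : ℂ) * g₁ ξ) →
          (∀ m t ξ, P (m + 1) t ξ = P 0 t ξ
            + ∫ t' in (0 : ℝ)..t, (Kker (t - t') ξ : ℂ) * convPow (P m t') (k - 1) ξ) →
          Filter.Tendsto
            (fun m => ⨆ t ∈ Set.Icc (0 : ℝ) T,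
              eLpNorm (fun ξ => P m t ξ - v t ξ) 1 volume)
            Filter.atTop (nhds 0) := by
  refine ⟨1/((k+1)*2^k), by positivity, ?_⟩
  intro g₀ g₁ hg₀m hg₁m hg₀i hg₁i M hM hMbound T hT0 hTle v hvcont hvbound hveq P hP0 hPrec
  have hT1 : T ≤ 1 := le_trans hTle (min_le_right _ _)
  have hTc : T ≤ (1/((k+1)*2^k)) * M ^ (-((k:ℝ)-1)/2) := le_trans hTle (min_le_left _ _)
  obtain ⟨fact1, fact2⟩ := real_facts k hk M T hM hT0 hT1 hTc
  -- notation
  set Q := Qit d k g₀ g₁ with hQ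
  set B : ℝ≥0∞ := ENNReal.ofReal (2*M) with hB
  have hBne : B ≠ ⊤ := ENNReal.ofReal_ne_top
  have hQmeas : ∀ m, Measurable (Function.uncurry (Q m)) := Qit_uncurry_meas hg₀m hg₁m
  have hQsec : ∀ m t, Measurable (Q m t) := fun m t =>
    (hQmeas m).comp measurable_prodMk_left
  have hvsec : ∀ t, Measurable (fun ξ : Euc d => v t ξ) := fun t =>
    (Lp.stronglyMeasurable (v t)).measurable
  -- P = Q
  have hPQ : ∀ m, P m = Q m := by
    intro m
    induction m with
    | zero =>
      funext t ξ
      exact hP0 t ξ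
    | succ m ih =>
      funext t ξ
      rw [hPrec m t ξ, hP0 t ξ, ih]
      rfl
  -- bound on Q 0
  have hQ0bound : ∀ t ∈ Icc (0:ℝ) T, NN (Q 0 t) ≤ ENNReal.ofReal M := by
    intro t ht
    have hpt : ∀ ξ : Euc d, (‖Q 0 t ξ‖₊ : ℝ≥0∞)
        ≤ (‖g₀ ξ‖₊ : ℝ≥0∞) + 2 * ‖((jb ξ : ℂ))⁻¹ * g₁ ξ‖₊ := by
      intro ξ
      have hnorm : ‖Q 0 t ξ‖ ≤ ‖g₀ ξ‖ + 2 * ‖((jb ξ : ℂ))⁻¹ * g₁ ξ‖ := by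
        have e1 : ‖((Real.cos (t * ‖ξ‖) : ℝ) : ℂ) * g₀ ξ‖ ≤ ‖g₀ ξ‖ := by
          rw [norm_mul, Complex.norm_real, Real.norm_eq_abs]
          exact mul_le_of_le_one_left (norm_nonneg _) (Real.abs_cos_le_one _)
        have e2 : ‖((Kker t ξ : ℝ) : ℂ) * g₁ ξ‖ ≤ 2 * ‖((jb ξ : ℂ))⁻¹ * g₁ ξ‖ := by
          rw [norm_mul, norm_mul, Complex.norm_real, Real.norm_eq_abs, norm_inv,
            Complex.norm_real, Real.norm_eq_abs, abs_of_pos (@jb_pos d ξ)]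
          calc |Kker t ξ| * ‖g₁ ξ‖ ≤ (2 * (jb ξ)⁻¹) * ‖g₁ ξ‖ :=
                mul_le_mul_of_nonneg_right
                  (Kker_abs_le_jb ht.1 (le_trans ht.2 hT1) ξ) (norm_nonneg _)
          _ = 2 * ((jb ξ)⁻¹ * ‖g₁ ξ‖) := by ring
        calc ‖Q 0 t ξ‖ ≤ ‖((Real.cos (t * ‖ξ‖) : ℝ) : ℂ) * g₀ ξ‖
              + ‖((Kker t ξ : ℝ) : ℂ) * g₁ ξ‖ := norm_add_le _ _
        _ ≤ ‖g₀ ξ‖ + 2 * ‖((jb ξ : ℂ))⁻¹ * g₁ ξ‖ := add_le_add e1 e2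
      have h2 := ENNReal.ofReal_le_ofReal hnorm
      rw [ENNReal.ofReal_add (norm_nonneg _) (by positivity),
        ENNReal.ofReal_mul (by norm_num : (0:ℝ) ≤ 2)] at h2
      rw [ofReal_norm_eq_enorm (Q 0 t ξ), ofReal_norm_eq_enorm (g₀ ξ),
        ofReal_norm_eq_enorm (((jb ξ : ℂ))⁻¹ * g₁ ξ)] at h2
      rw [show ENNReal.ofReal 2 = (2:ℝ≥0∞) by norm_num] at h2
      exact h2
    calc NN (Q 0 t) ≤ ∫⁻ ξ, ((‖g₀ ξ‖₊ : ℝ≥0∞) + 2 * ‖((jb ξ : ℂ))⁻¹ * g₁ ξ‖₊) ∂volume :=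
          lintegral_mono hpt
    _ = NN g₀ + 2 * NN (fun ξ => ((jb ξ : ℂ))⁻¹ * g₁ ξ) := by
        rw [lintegral_add_left hg₀m.nnnorm.coe_nnreal_ennreal]
        congr 1
        exact lintegral_const_mul' _ _ (by norm_num)
    _ ≤ ENNReal.ofReal M := by
        rw [NN_eq_eLpNorm, NN_eq_eLpNorm]
        exact hMbound
  -- uniform bound on iterates
  have hQbound : ∀ m, ∀ t ∈ Icc (0:ℝ) T, NN (Q m t) ≤ B := by
    intro m
    induction m with
    | zero =>
      intro t ht
      refine le_trans (hQ0bound t ht) (ENNReal.ofReal_le_ofReal (by linarith))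
    | succ m ih =>
      intro t ht
      have hpt : ∀ ξ : Euc d, (‖Q (m+1) t ξ‖₊ : ℝ≥0∞)
          ≤ (‖Q 0 t ξ‖₊ : ℝ≥0∞)
            + ‖∫ t' in (0:ℝ)..t, (Kker (t - t') ξ : ℂ) * convPow (Q m t') (k-1) ξ‖₊ := by
        intro ξ
        have : Q (m+1) t ξ = Q 0 t ξ
            + ∫ t' in (0:ℝ)..t, (Kker (t - t') ξ : ℂ) * convPow (Q m t') (k-1) ξ := rfl
        rw [this]
        refine le_trans (ENNReal.coe_le_coe.2 (nnnorm_add_le _ _)) ?_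
        rw [ENNReal.coe_add]
      have hBae : ∀ᵐ t' ∂(volume.restrict (Ioc (0:ℝ) t)), NN (Q m t') ≤ B := by
        have hsub : Ioc (0:ℝ) t ⊆ Icc (0:ℝ) T := fun s hs => ⟨le_of_lt hs.1, le_trans hs.2 ht.2⟩
        filter_upwards [ae_restrict_mem measurableSet_Ioc] with t' ht'
        exact ih t' (hsub ht')
      calc NN (Q (m+1) t)
          ≤ ∫⁻ ξ, ((‖Q 0 t ξ‖₊ : ℝ≥0∞)
              + ‖∫ t' in (0:ℝ)..t, (Kker (t - t') ξ : ℂ) * convPow (Q m t') (k-1) ξ‖₊)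
            ∂volume := lintegral_mono hpt
        _ = NN (Q 0 t) + ∫⁻ ξ,
              (‖∫ t' in (0:ℝ)..t, (Kker (t - t') ξ : ℂ) * convPow (Q m t') (k-1) ξ‖₊ : ℝ≥0∞)
            ∂volume := lintegral_add_left (hQsec 0 t).nnnorm.coe_nnreal_ennreal _
        _ ≤ ENNReal.ofReal M + (ENNReal.ofReal T * B ^ ((k-1)+1) * ENNReal.ofReal t) := by
            refine add_le_add (hQ0bound t ht) ?_
            refine le_trans (time_lint_le _ (integrand_uncurry_meas (hQmeas m) t (k-1)) ht.1) ?_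
            exact timeavg_bound (hQmeas m) ht.1 ht.2 (k-1) hBae
        _ ≤ ENNReal.ofReal M + ENNReal.ofReal M := by
            refine add_le_add le_rfl ?_
            have hkk : (k-1)+1 = k := by omega
            rw [hkk, hB]
            rw [← ENNReal.ofReal_pow (by linarith), ← ENNReal.ofReal_mul (by linarith),
              ← ENNReal.ofReal_mul (by positivity)]
            refine ENNReal.ofReal_le_ofReal ?_
            have h2Mk : (0:ℝ) ≤ (2*M)^k := by positivity
            nlinarith [ht.1, ht.2, mul_le_mul_of_nonneg_left ht.2 (by positivity : (0:ℝ) ≤ T * (2*M)^k)]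
        _ = B := by
            rw [hB, ← ENNReal.ofReal_add (by linarith) (by linarith)]
            congr 1
            ring
  -- representative of v
  obtain ⟨w, hwmeas, hwae⟩ := exists_vrep hT0 v hvcont
  have hwsec : ∀ t, Measurable (w t) := fun t => hwmeas.comp measurable_prodMk_left
  have hwae' : ∀ᵐ t' ∂(volume : Measure ℝ), t' ∈ Icc (0:ℝ) T →
      (w t' =ᵐ[(volume : Measure (Euc d))] fun ξ => v t' ξ) := ae_imp_of_ae_restrict hwae
  have NNcongr : ∀ {f g : Euc d → ℂ}, f =ᵐ[(volume : Measure (Euc d))] g → NN f = NN g :=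
    fun h => lintegral_congr_ae (h.fun_comp fun z => ((‖z‖₊ : ℝ≥0∞)))
  set D : ℕ → ℝ≥0∞ := fun m => ⨆ t ∈ Icc (0:ℝ) T, NN (fun ξ => Q m t ξ - v t ξ) with hD
  have hvb' : ∀ t ∈ Icc (0:ℝ) T, NN (fun ξ => v t ξ) ≤ B := by
    intro t ht
    rw [NN_eq_eLpNorm]
    exact hvbound t ht
  have hD0 : D 0 ≤ ENNReal.ofReal (3*M) := by
    refine iSup₂_le fun t ht => ?_
    calc NN (fun ξ => Q 0 t ξ - v t ξ)
        ≤ ∫⁻ ξ, ((‖Q 0 t ξ‖₊ : ℝ≥0∞) + (‖v t ξ‖₊ : ℝ≥0∞)) ∂volume := by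
          refine lintegral_mono fun ξ => ?_
          show (‖Q 0 t ξ - v t ξ‖₊ : ℝ≥0∞) ≤ _
          exact_mod_cast nnnorm_sub_le _ _
    _ = NN (Q 0 t) + NN (fun ξ => v t ξ) := lintegral_add_left (hQsec 0 t).nnnorm.coe_nnreal_ennreal _
    _ ≤ ENNReal.ofReal M + ENNReal.ofReal (2*M) := add_le_add (hQ0bound t ht) (hvb' t ht)
    _ = ENNReal.ofReal (3*M) := by
        rw [← ENNReal.ofReal_add (by linarith) (by linarith)]
        congr 1
        ring
  -- contraction step
  have hstep : ∀ m, D (m+1) ≤ ENNReal.ofReal (1/2) * D m := by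
    intro m
    refine iSup₂_le fun t ht => ?_
    have hsubIcc : Ioc (0:ℝ) t ⊆ Icc (0:ℝ) T := fun s hs => ⟨le_of_lt hs.1, le_trans hs.2 ht.2⟩
    set F₁ : ℝ → Euc d → ℂ :=
      fun t' ξ => (Kker (t - t') ξ : ℂ) * convPow (Q m t') (k-1) ξ with hF₁def
    set F₂ : ℝ → Euc d → ℂ :=
      fun t' ξ => (Kker (t - t') ξ : ℂ) * convPow (w t') (k-1) ξ with hF₂def
    have hF₁ : Measurable (Function.uncurry F₁) := integrand_uncurry_meas (hQmeas m) t (k-1)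
    have hF₂ : Measurable (Function.uncurry F₂) := integrand_uncurry_meas hwmeas t (k-1)
    have hres : ∀ᵐ t' ∂(volume.restrict (Ioc (0:ℝ) t)),
        (w t' =ᵐ[(volume : Measure (Euc d))] fun ξ => v t' ξ) ∧ t' ∈ Icc (0:ℝ) T := by
      filter_upwards [ae_restrict_mem measurableSet_Ioc, ae_restrict_of_ae hwae']
        with t' h1 h2
      exact ⟨h2 (hsubIcc h1), hsubIcc h1⟩
    have hBae₁ : ∀ᵐ t' ∂(volume.restrict (Ioc (0:ℝ) t)), NN (Q m t') ≤ B := by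
      filter_upwards [hres] with t' h
      exact hQbound m t' h.2
    have hBae₂ : ∀ᵐ t' ∂(volume.restrict (Ioc (0:ℝ) t)), NN (w t') ≤ B := by
      filter_upwards [hres] with t' h
      rw [NNcongr h.1]
      exact hvb' t' h.2
    have hRHSne : ENNReal.ofReal T * B ^ ((k-1)+1) * ENNReal.ofReal t ≠ ⊤ :=
      ENNReal.mul_ne_top (ENNReal.mul_ne_top ENNReal.ofReal_ne_top
        (ENNReal.pow_ne_top hBne)) ENNReal.ofReal_ne_top
    have hfin₁ : (∫⁻ t' in Ioc (0:ℝ) t, (∫⁻ ξ, ‖F₁ t' ξ‖₊ ∂volume) ∂volume) ≠ ⊤ :=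
      ne_top_of_le_ne_top hRHSne (timeavg_bound (hQmeas m) ht.1 ht.2 (k-1) hBae₁)
    have hfin₂ : (∫⁻ t' in Ioc (0:ℝ) t, (∫⁻ ξ, ‖F₂ t' ξ‖₊ ∂volume) ∂volume) ≠ ⊤ :=
      ne_top_of_le_ne_top hRHSne (timeavg_bound hwmeas ht.1 ht.2 (k-1) hBae₂)
    have hii₁ := time_integrand_integrable F₁ hF₁ ht.1 hfin₁
    have hii₂ := time_integrand_integrable F₂ hF₂ ht.1 hfin₂
    -- replace v by w inside the time integral
    have heqint : ∀ ξ : Euc d,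
        (∫ t' in (0:ℝ)..t, (Kker (t - t') ξ : ℂ) * convPow (fun x => v t' x) (k-1) ξ)
          = ∫ t' in (0:ℝ)..t, F₂ t' ξ := by
      intro ξ
      apply intervalIntegral.integral_congr_ae
      filter_upwards [hwae'] with t' ht' hmem
      rw [uIoc_of_le ht.1] at hmem
      have hIcc : t' ∈ Icc (0:ℝ) T := hsubIcc hmem
      have heq := convPow_succ_congr ((ht' hIcc).symm :
        (fun x => v t' x) =ᵐ[(volume : Measure (Euc d))] w t') (k-2)
      rw [show k - 2 + 1 = k - 1 by omega] at heq
      rw [heq]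
    have hveq' : ∀ᵐ ξ ∂(volume : Measure (Euc d)),
        v t ξ = Q 0 t ξ + ∫ t' in (0:ℝ)..t, F₂ t' ξ := by
      filter_upwards [hveq t ht] with ξ h
      rw [h, heqint ξ]
      rfl
    have hkey : ∀ᵐ ξ ∂(volume : Measure (Euc d)),
        Q (m+1) t ξ - v t ξ = ∫ t' in (0:ℝ)..t, (F₁ t' ξ - F₂ t' ξ) := by
      filter_upwards [hveq', hii₁, hii₂] with ξ h1 h2 h3
      have hQexp : Q (m+1) t ξ = Q 0 t ξ + ∫ t' in (0:ℝ)..t, F₁ t' ξ := rfl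
      rw [hQexp, h1, intervalIntegral.integral_sub h2 h3]
      ring
    have hK' : ((k-1:ℕ) : ℝ≥0∞) + 1 = ((k:ℕ) : ℝ≥0∞) := by
      have : ((k-1:ℕ) : ℝ≥0∞) + ((1:ℕ) : ℝ≥0∞) = (((k-1)+1:ℕ) : ℝ≥0∞) := by
        exact_mod_cast rfl
      simpa [show (k-1)+1 = k by omega] using this
    calc NN (fun ξ => Q (m+1) t ξ - v t ξ)
        = ∫⁻ ξ, ‖∫ t' in (0:ℝ)..t, (F₁ t' ξ - F₂ t' ξ)‖₊ ∂volume := by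
          refine lintegral_congr_ae (hkey.mono fun ξ h => ?_)
          exact congrArg (fun z : ℂ => ((‖z‖₊ : ℝ≥0∞))) h
      _ ≤ ∫⁻ t' in Ioc (0:ℝ) t, (∫⁻ ξ, ‖F₁ t' ξ - F₂ t' ξ‖₊ ∂volume) ∂volume :=
          time_lint_le (fun t' ξ => F₁ t' ξ - F₂ t' ξ) (hF₁.sub hF₂) ht.1
      _ ≤ ∫⁻ _ in Ioc (0:ℝ) t,
            (ENNReal.ofReal T * ((((k-1:ℕ) : ℝ≥0∞) + 1) * B^(k-1) * D m)) ∂volume := by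
          refine lintegral_mono_ae ?_
          filter_upwards [hres, ae_restrict_mem measurableSet_Ioc] with t' h hmem
          have hd : ∀ ξ : Euc d, F₁ t' ξ - F₂ t' ξ
              = (Kker (t - t') ξ : ℂ)
                * (convPow (Q m t') (k-1) ξ - convPow (w t') (k-1) ξ) := by
            intro ξ
            rw [hF₁def, hF₂def]
            ring
          have hwB : NN (w t') ≤ B := by
            rw [NNcongr h.1]
            exact hvb' t' h.2
          have hQW : NN (fun ξ => Q m t' ξ - w t' ξ) = NN (fun ξ => Q m t' ξ - v t' ξ) := by
            refine NNcongr (h.1.mono fun ξ hξ => ?_)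
            simp only
            rw [hξ]
          calc (∫⁻ ξ, ‖F₁ t' ξ - F₂ t' ξ‖₊ ∂volume)
              = NN (fun ξ => (Kker (t - t') ξ : ℂ)
                  * (convPow (Q m t') (k-1) ξ - convPow (w t') (k-1) ξ)) := by
                refine lintegral_congr fun ξ => ?_
                rw [hd ξ]
            _ ≤ ENNReal.ofReal T
                  * NN (fun ξ => convPow (Q m t') (k-1) ξ - convPow (w t') (k-1) ξ) :=
                NN_K_mul_le (by linarith [hmem.1, hmem.2, ht.2] : 0 ≤ t - t')
                  (by linarith [hmem.1, hmem.2, ht.2] : t - t' ≤ T)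
            _ ≤ ENNReal.ofReal T * ((((k-1:ℕ) : ℝ≥0∞) + 1) * B^(k-1)
                  * NN (fun ξ => Q m t' ξ - w t' ξ)) :=
                mul_le_mul_right (NN_convPow_sub_le (hQsec m t') (hwsec t') hBne
                  (hQbound m t' h.2) hwB (k-1)) _
            _ ≤ ENNReal.ofReal T * ((((k-1:ℕ) : ℝ≥0∞) + 1) * B^(k-1) * D m) := by
                refine mul_le_mul_right (mul_le_mul_right ?_ _) _
                rw [hQW]
                exact le_biSup (f := fun s => NN (fun ξ => Q m s ξ - v s ξ)) h.2
      _ = (ENNReal.ofReal T * ((((k-1:ℕ) : ℝ≥0∞) + 1) * B^(k-1) * D m)) * ENNReal.ofReal t := by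
          rw [setLIntegral_const, Real.volume_Ioc, sub_zero]
      _ ≤ ENNReal.ofReal (1/2) * D m := by
          have harr : (ENNReal.ofReal T * ((((k-1:ℕ) : ℝ≥0∞) + 1) * B^(k-1) * D m))
              * ENNReal.ofReal t
              = (ENNReal.ofReal T * ((((k-1:ℕ) : ℝ≥0∞) + 1) * B^(k-1)) * ENNReal.ofReal t)
                * D m := by ring
          rw [harr]
          refine mul_le_mul_left ?_ _
          rw [hK', ← ENNReal.ofReal_natCast k, hB,
            ← ENNReal.ofReal_pow (by linarith : (0:ℝ) ≤ 2*M),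
            ← ENNReal.ofReal_mul (by positivity),
            ← ENNReal.ofReal_mul (by positivity),
            ← ENNReal.ofReal_mul (by positivity)]
          refine ENNReal.ofReal_le_ofReal ?_
          have h2Mk : (0:ℝ) ≤ (2*M)^(k-1) := by positivity
          nlinarith [ht.1, ht.2, mul_le_mul_of_nonneg_left ht.2
            (by positivity : (0:ℝ) ≤ T * (k:ℝ) * (2*M)^(k-1))]
  -- geometric decay
  have hiter : ∀ m, D m ≤ (ENNReal.ofReal (1/2))^m * ENNReal.ofReal (3*M) := by
    intro m
    induction m with
    | zero => simpa using hD0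
    | succ m ih =>
      calc D (m+1) ≤ ENNReal.ofReal (1/2) * D m := hstep m
      _ ≤ ENNReal.ofReal (1/2) * ((ENNReal.ofReal (1/2))^m * ENNReal.ofReal (3*M)) :=
          mul_le_mul_right ih _
      _ = (ENNReal.ofReal (1/2))^(m+1) * ENNReal.ofReal (3*M) := by ring
  -- conclusion
  have hsup_eq : ∀ m, (⨆ t ∈ Icc (0:ℝ) T, eLpNorm (fun ξ => P m t ξ - v t ξ) 1 volume)
      = D m := by
    intro m
    have he : ∀ t : ℝ, eLpNorm (fun ξ => P m t ξ - v t ξ) 1 volume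
        = NN (fun ξ => Q m t ξ - v t ξ) := by
      intro t
      rw [hPQ m, NN_eq_eLpNorm]
    simp_rw [he]
    rfl
  have hhalf : ENNReal.ofReal (1/2) < 1 := ENNReal.ofReal_lt_one.2 (by norm_num)
  have htend : Tendsto (fun m => (ENNReal.ofReal (1/2))^m * ENNReal.ofReal (3*M)) atTop
      (𝓝 0) := by
    have h := ENNReal.Tendsto.mul_const
      (ENNReal.tendsto_pow_atTop_nhds_zero_of_lt_one hhalf)
      (Or.inr (ENNReal.ofReal_ne_top : ENNReal.ofReal (3*M) ≠ ⊤))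
    simpa using h
  refine tendsto_of_tendsto_of_tendsto_of_le_of_le tendsto_const_nhds htend
    (fun m => zero_le) (fun m => ?_)
  rw [hsup_eq m]
  exact hiter m
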